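/- Let D : ℝ → ℝ be measurable with D ≥ 0, and let Z be a random variable with 𝔓(Z > 0) = 1 such that E[log(1 + D(Z)·Z)] < ∞. Then the map C : S ↦ E[log(1 + S·D(Z)·Z)] is differentiable on (0,∞) with S·C′(S) = E[(S·D(Z)·Z)/(1 + S·D(Z)·Z)], and E[(S·D(Z)·Z)/(1 + S·D(Z)·Z)] → 1 − 𝔓(D(Z) = 0) as S → ∞. In other words, the high-SNR pre-log constant of the scheme with power ratio D equals one minus the probability of outage. -/

import Mathlib

open MeasureTheory Filter Topology

lemma aux_deriv (x : ℝ) (hx : 0 ≤ x) (S : ℝ) (hS : 0 < S) :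
    HasDerivAt (fun S : ℝ => Real.log (1 + S * x)) (x / (1 + S * x)) S := by
  have hpos : 0 < 1 + S * x := by positivity
  have h1 : HasDerivAt (fun S : ℝ => 1 + S * x) x S := by
    simpa using ((hasDerivAt_mul_const x).const_add (1 : ℝ))
  simpa using h1.log hpos.ne'

lemma aux_bound (x : ℝ) (hx : 0 ≤ x) (S c : ℝ) (hc : 0 < c) (hS : c ≤ S) :
    x / (1 + S * x) ≤ 1 / c := by
  have hS0 : 0 < S := hc.trans_le hS
  have hpos : 0 < 1 + S * x := by positivity
  have h1 : x / (1 + S * x) ≤ 1 / S := by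
    rw [div_le_div_iff₀ hpos hS0]
    nlinarith
  exact h1.trans (by gcongr)

lemma aux_log_bound (x : ℝ) (hx : 0 ≤ x) (S : ℝ) (hS : 0 < S) :
    Real.log (1 + S * x) ≤ Real.log (1 + x) + |Real.log S| := by
  rcases le_total S 1 with h | h
  · have : Real.log (1 + S * x) ≤ Real.log (1 + x) := by
      apply Real.log_le_log (by positivity); nlinarith
    linarith [abs_nonneg (Real.log S)]
  · have h1 : Real.log (1 + S * x) ≤ Real.log (S * (1 + x)) := by
      apply Real.log_le_log (by positivity); nlinarith
    rw [Real.log_mul hS.ne' (by positivity)] at h1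
    have := le_abs_self (Real.log S)
    linarith

lemma aux_tendsto (x : ℝ) (hx : 0 < x) :
    Tendsto (fun S : ℝ => S * x / (1 + S * x)) atTop (𝓝 1) := by
  have h1 : Tendsto (fun S : ℝ => 1 + S * x) atTop atTop :=
    tendsto_atTop_add_const_left _ _ (tendsto_id.atTop_mul_const hx)
  have h2 : Tendsto (fun S : ℝ => 1 - (1 + S * x)⁻¹) atTop (𝓝 (1 - 0)) :=
    tendsto_const_nhds.sub h1.inv_tendsto_atTop
  rw [sub_zero] at h2
  apply h2.congr'
  filter_upwards [eventually_ge_atTop 1] with S hS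
  have hpos : 0 < 1 + S * x := by nlinarith
  field_simp
  ring

/-- **The pre-log constant equals one minus the outage probability.** Let `D ≥ 0` be a
measurable power-ratio function and `Z` a channel gain with `P(Z > 0) = 1` such that
`E[log(1 + D(Z)·Z)] < ∞` (i.e. the a.s. nonnegative integrand is integrable). Then the
capacity `C(S) = E[log(1 + S·D(Z)·Z)]` is differentiable on `(0,∞)` with
`S·C′(S) = E[(S·D(Z)·Z)/(1 + S·D(Z)·Z)]`, and this quantity tends to `1 − P(D(Z) = 0)` as
`S → ∞`. -/
theorem prelog_eq_one_sub_outage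
    {Ω : Type*} [MeasurableSpace Ω] (P : Measure Ω) [IsProbabilityMeasure P]
    (Z : Ω → ℝ) (hZ : Measurable Z) (hZpos : P {ω | 0 < Z ω} = 1)
    (D : ℝ → ℝ) (hD_meas : Measurable D) (hD_nonneg : ∀ z, 0 ≤ D z)
    (h_int : Integrable (fun ω => Real.log (1 + D (Z ω) * Z ω)) P) :
    (∀ S, 0 < S →
      HasDerivAt (fun S => ∫ ω, Real.log (1 + S * D (Z ω) * Z ω) ∂P)
        ((∫ ω, (S * D (Z ω) * Z ω) / (1 + S * D (Z ω) * Z ω) ∂P) / S) S) ∧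
    Tendsto (fun S => ∫ ω, (S * D (Z ω) * Z ω) / (1 + S * D (Z ω) * Z ω) ∂P)
      atTop (𝓝 (1 - (P {ω | D (Z ω) = 0}).toReal)) := by
  have hXmeas : Measurable (fun ω => D (Z ω) * Z ω) := (hD_meas.comp hZ).mul hZ
  have haeZ : ∀ᵐ ω ∂P, 0 < Z ω := by
    rw [ae_iff]
    have hms : MeasurableSet {ω | 0 < Z ω} := hZ measurableSet_Ioi
    have := measure_compl hms (measure_ne_top P _)
    simpa [hZpos, Set.compl_setOf] using this
  have hXnn : ∀ᵐ ω ∂P, 0 ≤ D (Z ω) * Z ω :=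
    haeZ.mono fun ω h => mul_nonneg (hD_nonneg _) h.le
  constructor
  · intro S₀ hS₀
    have hε : (0:ℝ) < S₀ / 2 := by linarith
    have hFmeas : ∀ᶠ S in 𝓝 S₀, AEStronglyMeasurable
        (fun ω => Real.log (1 + S * (D (Z ω) * Z ω))) P := by
      filter_upwards with S
      exact (Real.measurable_log.comp
        (measurable_const.add (hXmeas.const_mul S))).aestronglyMeasurable
    have hFint : Integrable (fun ω => Real.log (1 + S₀ * (D (Z ω) * Z ω))) P := by
      have hb : Integrable (fun ω => Real.log (1 + D (Z ω) * Z ω) + |Real.log S₀|) P :=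
        h_int.add (integrable_const _)
      apply hb.mono'
      · exact (Real.measurable_log.comp
          (measurable_const.add (hXmeas.const_mul S₀))).aestronglyMeasurable
      · filter_upwards [hXnn] with ω hω
        rw [Real.norm_eq_abs, abs_of_nonneg (Real.log_nonneg (by nlinarith))]
        exact aux_log_bound _ hω _ hS₀
    have hF'meas : AEStronglyMeasurable
        (fun ω => (D (Z ω) * Z ω) / (1 + S₀ * (D (Z ω) * Z ω))) P :=
      (hXmeas.div (measurable_const.add (hXmeas.const_mul S₀))).aestronglyMeasurable
    have hbound : ∀ᵐ ω ∂P, ∀ S ∈ Metric.ball S₀ (S₀ / 2),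
        ‖(D (Z ω) * Z ω) / (1 + S * (D (Z ω) * Z ω))‖ ≤ 2 / S₀ := by
      filter_upwards [hXnn] with ω hω
      intro S hS
      rw [Metric.mem_ball, Real.dist_eq] at hS
      obtain ⟨h1, h2⟩ := abs_lt.mp hS
      have hS2 : S₀ / 2 ≤ S := by linarith
      have hSpos : 0 < S := by linarith
      have hpos : 0 < 1 + S * (D (Z ω) * Z ω) := by positivity
      rw [Real.norm_eq_abs, abs_of_nonneg (div_nonneg hω hpos.le)]
      calc (D (Z ω) * Z ω) / (1 + S * (D (Z ω) * Z ω)) ≤ 1 / (S₀ / 2) :=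
            aux_bound _ hω S (S₀/2) hε hS2
        _ = 2 / S₀ := by field_simp
    have hdiff : ∀ᵐ ω ∂P, ∀ S ∈ Metric.ball S₀ (S₀ / 2),
        HasDerivAt (fun S => Real.log (1 + S * (D (Z ω) * Z ω)))
          ((D (Z ω) * Z ω) / (1 + S * (D (Z ω) * Z ω))) S := by
      filter_upwards [hXnn] with ω hω
      intro S hS
      rw [Metric.mem_ball, Real.dist_eq] at hS
      obtain ⟨h1, h2⟩ := abs_lt.mp hS
      exact aux_deriv _ hω S (by linarith)
    obtain ⟨-, key⟩ := hasDerivAt_integral_of_dominated_loc_of_deriv_le (x₀ := S₀)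
      (bound := fun _ => 2 / S₀) (Metric.ball_mem_nhds S₀ hε) hFmeas hFint hF'meas hbound
      (integrable_const _) hdiff
    have heq1 : (fun S => ∫ ω, Real.log (1 + S * D (Z ω) * Z ω) ∂P)
        = fun S => ∫ ω, Real.log (1 + S * (D (Z ω) * Z ω)) ∂P := by
      simp only [mul_assoc]
    have heq2 : (∫ ω, (S₀ * D (Z ω) * Z ω) / (1 + S₀ * D (Z ω) * Z ω) ∂P) / S₀
        = ∫ ω, (D (Z ω) * Z ω) / (1 + S₀ * (D (Z ω) * Z ω)) ∂P := by
      have hpt : ∀ ω, (S₀ * D (Z ω) * Z ω) / (1 + S₀ * D (Z ω) * Z ω)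
          = S₀ * ((D (Z ω) * Z ω) / (1 + S₀ * (D (Z ω) * Z ω))) := by
        intro ω; rw [mul_assoc, mul_div_assoc]
      simp only [hpt]
      rw [integral_const_mul, mul_div_cancel_left₀ _ hS₀.ne']
    rw [heq1, heq2]
    exact key
  · have hsm : MeasurableSet {ω | D (Z ω) = 0} :=
      (hD_meas.comp hZ) (measurableSet_singleton 0)
    have hint_f : ∫ ω, ({ω | D (Z ω) = 0}ᶜ).indicator (fun _ => (1:ℝ)) ω ∂P
        = 1 - (P {ω | D (Z ω) = 0}).toReal := by
      rw [integral_indicator_const _ hsm.compl, smul_eq_mul, mul_one, measureReal_def,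
        measure_compl hsm (measure_ne_top P _), measure_univ,
        ENNReal.toReal_sub_of_le prob_le_one (by simp), ENNReal.toReal_one]
    rw [← hint_f]
    apply tendsto_integral_filter_of_dominated_convergence (fun _ => (1:ℝ))
    · filter_upwards with S
      exact ((((hD_meas.comp hZ).const_mul S).mul hZ).div
        (measurable_const.add (((hD_meas.comp hZ).const_mul S).mul hZ))).aestronglyMeasurable
    · filter_upwards [eventually_ge_atTop (1:ℝ)] with S hS
      filter_upwards [hXnn] with ω hω
      have hS0 : (0:ℝ) < S := by linarith
      have hpos : 0 < 1 + S * D (Z ω) * Z ω := by nlinarith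
      rw [Real.norm_eq_abs, abs_of_nonneg (div_nonneg (by nlinarith) hpos.le)]
      rw [div_le_one hpos]; nlinarith
    · exact integrable_const _
    · filter_upwards [haeZ] with ω hω
      by_cases hD : D (Z ω) = 0
      · have hi : ({ω | D (Z ω) = 0}ᶜ).indicator (fun _ => (1:ℝ)) ω = 0 :=
          Set.indicator_of_notMem (by simp [hD]) _
        rw [hi]
        have : (fun S : ℝ => (S * D (Z ω) * Z ω) / (1 + S * D (Z ω) * Z ω))
            = fun _ => (0:ℝ) := by funext S; simp [hD]
        rw [this]; exact tendsto_const_nhds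
      · have hi : ({ω | D (Z ω) = 0}ᶜ).indicator (fun _ => (1:ℝ)) ω = 1 :=
          Set.indicator_of_mem (by simp [hD]) _
        rw [hi]
        have hx : 0 < D (Z ω) * Z ω :=
          mul_pos (lt_of_le_of_ne (hD_nonneg _) (Ne.symm hD)) hω
        simpa [mul_assoc] using aux_tendsto _ hx
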